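/- Suppose η_n → 0, √n·η_n → ∞, θ_n/η_n → 1, and √n(η_n − θ_n) → r ∈ ℝ. Then the distribution of η_n^{-1}(θ̂_H − θ_n) under P_{n,θ_n} converges weakly to Φ(r)·δ_{−1} + (1 − Φ(r))·δ_0. -/

import Mathlib

open MeasureTheory ProbabilityTheory Real Filter Topology Set

noncomputable def stdGauss : Measure ℝ := gaussianReal 0 1

/-- Standard normal cdf. -/
noncomputable def Phi (x : ℝ) : ℝ := (stdGauss (Set.Iic x)).toReal

/-- Standard normal density. -/
noncomputable def phi (x : ℝ) : ℝ := gaussianPDFReal 0 1 x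

/-- Hard-thresholding estimator. -/
noncomputable def hardThresh (η y : ℝ) : ℝ := if η < |y| then y else 0

/-- Soft-thresholding (LASSO) estimator. -/
noncomputable def softThresh (η y : ℝ) : ℝ := Real.sign y * max (|y| - η) 0

/-- SCAD estimator. -/
noncomputable def scadThresh (a η y : ℝ) : ℝ :=
  if |y| ≤ 2 * η then Real.sign y * max (|y| - η) 0
  else if |y| ≤ a * η then ((a - 1) * y - Real.sign y * a * η) / (a - 2)
  else y

theorem stmt_19 (η θ : ℕ → ℝ) (hηpos : ∀ n, 0 < η n) (r : ℝ)
    (hη0 : Tendsto η atTop (𝓝 0))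
    (hηe : Tendsto (fun n : ℕ => Real.sqrt n * η n) atTop atTop)
    (hθζ : Tendsto (fun n => θ n / η n) atTop (𝓝 1))
    (hr : Tendsto (fun n : ℕ => Real.sqrt n * (η n - θ n)) atTop (𝓝 r)) :
    ∀ f : BoundedContinuousFunction ℝ ℝ,
      Tendsto (fun n : ℕ => ∫ x, f x ∂(Measure.map
            (fun z => (η n)⁻¹ * (hardThresh (η n) (θ n + z / Real.sqrt n) - θ n)) stdGauss))
        atTop
        (𝓝 (∫ x, f x ∂(ENNReal.ofReal (Phi r) • Measure.dirac (-1 : ℝ)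
            + ENNReal.ofReal (1 - Phi r) • Measure.dirac (0 : ℝ)))) := by
  intro f
  have hprob : IsProbabilityMeasure stdGauss := by unfold stdGauss; infer_instance
  set g : ℕ → ℝ → ℝ :=
    fun n z => (η n)⁻¹ * (hardThresh (η n) (θ n + z / Real.sqrt n) - θ n) with hg
  -- Phi bounds
  have hPhi0 : 0 ≤ Phi r := ENNReal.toReal_nonneg
  have hPhi1 : Phi r ≤ 1 := by
    have h1 : stdGauss (Set.Iic r) ≤ 1 := prob_le_one
    have := ENNReal.toReal_mono (by norm_num) h1
    simpa [Phi] using this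
  -- RHS value
  have hfin1 : IsFiniteMeasure (ENNReal.ofReal (Phi r) • Measure.dirac (-1 : ℝ)) := by
    refine ⟨?_⟩
    rw [Measure.smul_apply, smul_eq_mul, measure_univ, mul_one]
    exact ENNReal.ofReal_lt_top
  have hfin2 : IsFiniteMeasure (ENNReal.ofReal (1 - Phi r) • Measure.dirac (0 : ℝ)) := by
    refine ⟨?_⟩
    rw [Measure.smul_apply, smul_eq_mul, measure_univ, mul_one]
    exact ENNReal.ofReal_lt_top
  have hRHS : (∫ x, f x ∂(ENNReal.ofReal (Phi r) • Measure.dirac (-1 : ℝ)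
      + ENNReal.ofReal (1 - Phi r) • Measure.dirac (0 : ℝ)))
      = Phi r * f (-1) + (1 - Phi r) * f 0 := by
    rw [integral_add_measure (f.integrable _) (f.integrable _), integral_smul_measure,
      integral_smul_measure, integral_dirac, integral_dirac,
      ENNReal.toReal_ofReal hPhi0, ENNReal.toReal_ofReal (by linarith)]
    simp [smul_eq_mul]
  -- measurability of g n
  have hgm : ∀ n, Measurable (g n) := by
    intro n
    have hh : Measurable (hardThresh (η n)) := by
      unfold hardThresh
      exact Measurable.ite (measurableSet_lt measurable_const measurable_abs)
        measurable_id measurable_const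
    exact (measurable_const.mul ((hh.comp
      (measurable_const.add (measurable_id.div_const _))).sub measurable_const))
  have hmap : ∀ n, (∫ x, f x ∂(Measure.map (g n) stdGauss)) = ∫ z, f (g n z) ∂stdGauss :=
    fun n => integral_map (hgm n).aemeasurable f.continuous.aestronglyMeasurable
  -- limit function
  set L : ℝ → ℝ := fun z => if z ≤ r then f (-1) else f 0 with hL
  have hLint : (∫ z, L z ∂stdGauss) = Phi r * f (-1) + (1 - Phi r) * f 0 := by
    have hLeq : L = fun z => Set.indicator (Set.Iic r) (fun _ => f (-1) - f 0) z + f 0 := by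
      funext z; by_cases h : z ≤ r <;> simp [hL, Set.indicator, h]
    rw [hLeq, integral_add (((integrable_const _).indicator measurableSet_Iic))
      (integrable_const _), integral_indicator_const _ measurableSet_Iic, integral_const,
      probReal_univ]
    have : stdGauss.real (Set.Iic r) = Phi r := rfl
    rw [this]; simp [smul_eq_mul]; ring
  -- a.e. z ≠ r
  have hnull : stdGauss {r} = 0 := by
    have hac : gaussianReal 0 1 ≪ (volume : Measure ℝ) :=
      gaussianReal_absolutelyContinuous 0 one_ne_zero
    have : (volume : Measure ℝ) {r} = 0 := Real.volume_singleton
    simpa [stdGauss] using hac this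
  have hae : ∀ᵐ z ∂stdGauss, z ≠ r := by
    rw [ae_iff]
    simpa using hnull
  -- auxiliary limits
  have hsum : Tendsto (fun n : ℕ => Real.sqrt n * (η n + θ n)) atTop atTop := by
    have h2 : Tendsto (fun n => (1 : ℝ) + θ n / η n) atTop (𝓝 2) := by
      have := hθζ.const_add (1 : ℝ)
      norm_num at this ⊢
      exact this
    have hmul := Filter.Tendsto.atTop_mul_pos (by norm_num : (0:ℝ) < 2) hηe h2
    refine hmul.congr (fun n => ?_)
    have hne : η n ≠ 0 := (hηpos n).ne'
    field_simp
  have hinv : Tendsto (fun n : ℕ => (Real.sqrt n * η n)⁻¹) atTop (𝓝 0) :=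
    hηe.inv_tendsto_atTop
  have hratio : Tendsto (fun n => -(θ n / η n)) atTop (𝓝 (-1)) := hθζ.neg
  have hsqrtpos : ∀ᶠ n : ℕ in atTop, 0 < Real.sqrt n := by
    filter_upwards [eventually_ge_atTop 1] with n hn
    exact Real.sqrt_pos.2 (by exact_mod_cast Nat.lt_of_lt_of_le Nat.zero_lt_one hn)
  -- pointwise convergence
  have hptwise : ∀ᵐ z ∂stdGauss, Tendsto (fun n => f (g n z)) atTop (𝓝 (L z)) := by
    filter_upwards [hae] with z hz
    rcases lt_or_gt_of_ne hz with hzr | hzr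
    · -- z < r : value is -θ/η → -1
      have hLz : L z = f (-1) := by simp [hL, hzr.le]
      rw [hLz]
      have hEq : ∀ᶠ n in atTop, f (g n z) = f (-(θ n / η n)) := by
        filter_upwards [hr.eventually_const_lt hzr, hsum.eventually_gt_atTop (-z), hsqrtpos]
          with n h1 h2 h3
        have habs : ¬ (η n < |θ n + z / Real.sqrt n|) := by
          rw [not_lt, abs_le]
          constructor
          · linarith [(lt_div_iff₀ h3).2 (by nlinarith : -(η n + θ n) * Real.sqrt n < z)]
          · linarith [(div_lt_iff₀ h3).2 (by nlinarith : z < (η n - θ n) * Real.sqrt n)]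
        have : g n z = -(θ n / η n) := by
          simp only [hg, hardThresh, if_neg habs]
          field_simp
          ring
        rw [this]
      exact Tendsto.congr' (hEq.mono fun n h => h.symm)
        ((f.continuous.tendsto (-1)).comp hratio)
    · -- z > r : value is z/(√n η) → 0
      have hLz : L z = f 0 := by simp [hL, not_le.2 hzr]
      rw [hLz]
      have hEq : ∀ᶠ n in atTop, f (g n z) = f (z * (Real.sqrt n * η n)⁻¹) := by
        filter_upwards [hr.eventually_lt_const hzr, hsqrtpos] with n h1 h3
        have hy : η n < θ n + z / Real.sqrt n := by
          nlinarith [(lt_div_iff₀ h3).2 (by nlinarith : (η n - θ n) * Real.sqrt n < z)]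
        have habs : η n < |θ n + z / Real.sqrt n| :=
          lt_of_lt_of_le hy (le_abs_self _)
        have : g n z = z * (Real.sqrt n * η n)⁻¹ := by
          simp only [hg, hardThresh, if_pos habs]
          field_simp
          ring
        rw [this]
      have h0 : Tendsto (fun n : ℕ => z * (Real.sqrt n * η n)⁻¹) atTop (𝓝 0) := by
        simpa using hinv.const_mul z
      exact Tendsto.congr' (hEq.mono fun n h => h.symm)
        ((f.continuous.tendsto 0).comp h0)
  -- dominated convergence
  have key : Tendsto (fun n => ∫ z, f (g n z) ∂stdGauss) atTop (𝓝 (∫ z, L z ∂stdGauss)) := by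
    refine tendsto_integral_of_dominated_convergence (fun _ => ‖f‖)
      (fun n => (f.continuous.measurable.comp (hgm n)).aestronglyMeasurable)
      (integrable_const _) (fun n => ?_) hptwise
    filter_upwards with z
    exact f.norm_coe_le_norm _
  rw [hRHS]
  rw [← hLint]
  exact Tendsto.congr (fun n => (hmap n).symm) key
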